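/- Let P, Q ∈ Γ_n with 0 < r ≤ p_i/q_i ≤ R for all i and 0 < r < 1 < R. Then the relative Jensen–Shannon divergence satisfies F(P||Q) := ∑ p_i·ln(2p_i/(p_i+q_i)) ≤ D(Q||P) − (1/2)Δ(P||Q), where D(Q||P) = ∑(q_i−p_i)·ln((p_i+q_i)/(2p_i)) and Δ(P||Q) = ∑(p_i−q_i)²/(p_i+q_i). -/
import Mathlib


theorem relJS_upper_bound (n : ℕ) (hn : 2 ≤ n) (p q : Fin n → ℝ)
    (hp : ∀ i, 0 < p i) (hq : ∀ i, 0 < q i)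
    (hps : ∑ i, p i = 1) (hqs : ∑ i, q i = 1)
    (r R : ℝ) (hr : 0 < r) (hr1 : r < 1) (h1R : 1 < R)
    (hbound : ∀ i, r ≤ p i / q i ∧ p i / q i ≤ R) :
    (∑ i, p i * Real.log (2 * p i / (p i + q i))) ≤
      (∑ i, (q i - p i) * Real.log ((p i + q i) / (2 * p i))) -
        (1 / 2) * ∑ i, (p i - q i) ^ 2 / (p i + q i) := by
  have key : ∀ i, p i * Real.log (2 * p i / (p i + q i)) ≤
      (q i - p i) * Real.log ((p i + q i) / (2 * p i)) -
        (1 / 2) * ((p i - q i) ^ 2 / (p i + q i)) + (p i - q i) / 2 := by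
    intro i
    have hpi := hp i
    have hqi := hq i
    have hs : 0 < p i + q i := by linarith
    have hlog : Real.log (2 * p i / (p i + q i)) ≤ 2 * p i / (p i + q i) - 1 :=
      Real.log_le_sub_one_of_pos (by positivity)
    have hlog2 : Real.log ((p i + q i) / (2 * p i)) =
        - Real.log (2 * p i / (p i + q i)) := by
      rw [← Real.log_inv]
      congr 1
      field_simp
    have h1 : q i * Real.log (2 * p i / (p i + q i)) ≤
        q i * (2 * p i / (p i + q i) - 1) :=
      mul_le_mul_of_nonneg_left hlog hqi.le
    have hid : q i * (2 * p i / (p i + q i) - 1) =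
        -((1 / 2) * ((p i - q i) ^ 2 / (p i + q i))) + (p i - q i) / 2 := by
      field_simp
      ring
    rw [hlog2]
    nlinarith [h1, hid]
  calc (∑ i, p i * Real.log (2 * p i / (p i + q i)))
      ≤ ∑ i, ((q i - p i) * Real.log ((p i + q i) / (2 * p i)) -
          (1 / 2) * ((p i - q i) ^ 2 / (p i + q i)) + (p i - q i) / 2) :=
        Finset.sum_le_sum fun i _ => key i
    _ = (∑ i, (q i - p i) * Real.log ((p i + q i) / (2 * p i))) -
          (1 / 2) * (∑ i, (p i - q i) ^ 2 / (p i + q i)) +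
          (∑ i, (p i - q i)) / 2 := by
        rw [Finset.sum_add_distrib, Finset.sum_sub_distrib, Finset.mul_sum,
          Finset.sum_div]
    _ = (∑ i, (q i - p i) * Real.log ((p i + q i) / (2 * p i))) -
          (1 / 2) * ∑ i, (p i - q i) ^ 2 / (p i + q i) := by
        rw [Finset.sum_sub_distrib, hps, hqs]
        ring
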